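/- (Per-observation surrogate bound.) Let q ∈ {-1, 1} and let x, x₀ be real numbers. Define z₀ = x₀ + 4·q·(1 - π(q·x₀)), where π(u) = exp(u)/(exp(u)+1). Then -log(π(q·x)) ≤ -log(π(q·x₀)) + (1/8)·(x - z₀)². -/

import Mathlib

/-- The logistic function π(u) = exp(u)/(exp(u)+1). -/
noncomputable def logistic (x : ℝ) : ℝ := Real.exp x / (Real.exp x + 1)

private lemma exp_add_one_pos (u : ℝ) : (0:ℝ) < Real.exp u + 1 := by positivity

private lemma logistic_hasDerivAt (u : ℝ) :
    HasDerivAt logistic (Real.exp u / (Real.exp u + 1) ^ 2) u := by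
  have h := ((Real.hasDerivAt_exp u).div ((Real.hasDerivAt_exp u).add_const 1)
    (ne_of_gt (exp_add_one_pos u)))
  exact h.congr_deriv (by ring)

private lemma logistic_deriv_bound (u : ℝ) :
    ‖Real.exp u / (Real.exp u + 1) ^ 2‖ ≤ (1/4 : ℝ) := by
  have h1 : (0:ℝ) < Real.exp u := Real.exp_pos u
  rw [Real.norm_eq_abs, abs_of_nonneg (by positivity)]
  rw [div_le_iff₀ (by positivity)]
  nlinarith [sq_nonneg (Real.exp u - 1)]

private lemma logistic_lipschitz (a b : ℝ) :
    |logistic a - logistic b| ≤ (1/4) * |a - b| := by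
  have := Convex.norm_image_sub_le_of_norm_hasDerivWithin_le
    (f := logistic) (f' := fun u => Real.exp u / (Real.exp u + 1) ^ 2)
    (fun u _ => (logistic_hasDerivAt u).hasDerivWithinAt)
    (fun u _ => logistic_deriv_bound u) convex_univ (Set.mem_univ b) (Set.mem_univ a)
  simpa [Real.norm_eq_abs, mul_comm] using this

private lemma F_hasDerivAt (u : ℝ) :
    HasDerivAt (fun t => Real.log (Real.exp t + 1)) (logistic u) u := by
  have h := ((Real.hasDerivAt_exp u).add_const 1).log (ne_of_gt (exp_add_one_pos u))
  simpa [logistic] using h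

/-- Taylor-type bound with 1/4-smoothness. -/
private lemma taylor_bound (a b : ℝ) :
    Real.log (Real.exp a + 1) ≤ Real.log (Real.exp b + 1)
      + logistic b * (a - b) + (1/8) * (a - b)^2 := by
  set D : ℝ → ℝ := fun t => Real.log (Real.exp b + 1) + logistic b * (t - b)
      + (1/8) * (t - b)^2 - Real.log (Real.exp t + 1) with hD
  have hDderiv : ∀ t, HasDerivAt D (logistic b + (1/4) * (t - b) - logistic t) t := by
    intro t
    have h1 : HasDerivAt (fun t : ℝ => Real.log (Real.exp b + 1) + logistic b * (t - b)
        + (1/8) * (t - b)^2) (logistic b + (1/4) * (t - b)) t := by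
      have h2 : HasDerivAt (fun t : ℝ => logistic b * (t - b)) (logistic b) t := by
        simpa using ((hasDerivAt_id t).sub_const b).const_mul (logistic b)
      have h3 : HasDerivAt (fun t : ℝ => (1/8) * (t - b)^2) ((1/4) * (t - b)) t := by
        have := (((hasDerivAt_id t).sub_const b).pow 2).const_mul (1/8 : ℝ)
        exact this.congr_deriv (by simp; ring)
      exact (h2.const_add _).add h3
    exact h1.sub (F_hasDerivAt t)
  have hDb : D b = 0 := by simp [hD]
  have hcont : Continuous D := by
    have : Differentiable ℝ D := fun t => (hDderiv t).differentiableAt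
    exact this.continuous
  have key : 0 ≤ D a := by
    rcases le_total b a with hba | hab
    · have hmono : MonotoneOn D (Set.Ici b) := by
        apply monotoneOn_of_deriv_nonneg (convex_Ici b) (hcont.continuousOn)
        · intro t ht
          exact (hDderiv t).differentiableAt.differentiableWithinAt
        · intro t ht
          rw [(hDderiv t).deriv]
          have ht' : b ≤ t := le_of_lt (by simpa using ht)
          have hl := logistic_lipschitz t b
          rw [show |t - b| = t - b from abs_of_nonneg (by linarith)] at hl
          rcases abs_le.mp hl with ⟨h1, h2⟩
          linarith
      have := hmono (Set.self_mem_Ici) (Set.mem_Ici.mpr hba) hba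
      simpa [hDb] using this
    · have hanti : AntitoneOn D (Set.Iic b) := by
        apply antitoneOn_of_deriv_nonpos (convex_Iic b) (hcont.continuousOn)
        · intro t ht
          exact (hDderiv t).differentiableAt.differentiableWithinAt
        · intro t ht
          rw [(hDderiv t).deriv]
          have ht' : t ≤ b := le_of_lt (by simpa using ht)
          have hl := logistic_lipschitz t b
          rw [show |t - b| = -(t - b) from abs_of_nonpos (by linarith)] at hl
          rcases abs_le.mp hl with ⟨h1, h2⟩
          linarith
      have := hanti (Set.mem_Iic.mpr hab) (Set.self_mem_Iic) hab
      simpa [hDb] using this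
  have : Real.log (Real.exp a + 1) ≤ Real.log (Real.exp b + 1) + logistic b * (a - b)
      + (1/8) * (a - b)^2 := by
    have := key
    simp only [hD] at this
    linarith
  exact this

private lemma neg_log_logistic (u : ℝ) :
    -Real.log (logistic u) = Real.log (Real.exp u + 1) - u := by
  rw [logistic, Real.log_div (ne_of_gt (Real.exp_pos u)) (ne_of_gt (exp_add_one_pos u)),
    Real.log_exp]
  ring

/-- Per-observation surrogate bound. For q ∈ {-1,1} and the
working response z₀ = x₀ + 4q(1 - π(q x₀)),
we have -log(π(qx)) ≤ -log(π(qx₀)) + (1/8)(x - z₀)². -/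
theorem per_observation_surrogate_bound (q x x₀ : ℝ) (hq : q = -1 ∨ q = 1) :
    -Real.log (logistic (q * x)) ≤
      -Real.log (logistic (q * x₀))
        + (1 / 8) * (x - (x₀ + 4 * q * (1 - logistic (q * x₀)))) ^ 2 := by
  have hq2 : q^2 = 1 := by rcases hq with h | h <;> rw [h] <;> ring
  have ht := taylor_bound (q * x) (q * x₀)
  rw [neg_log_logistic, neg_log_logistic]
  set p := logistic (q * x₀)
  nlinarith [sq_nonneg (1 - p), sq_nonneg (x - x₀), sq_nonneg q]
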